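/- Every real m×m matrix r with Frobenius norm at most 1 lies in the convex hull of the deterministic strategy matrices d_{a,b}, where d_{a,b} has entries aₓb_y for sign vectors a, b ∈ {−1,+1}^m. -/

import Mathlib

open Finset

private noncomputable def sgnb (x : Bool) : ℝ := if x then 1 else -1

private lemma sgnb_sq (x : Bool) : sgnb x * sgnb x = 1 := by
  cases x <;> simp [sgnb]

private lemma sgnb_pm (x : Bool) : sgnb x = 1 ∨ sgnb x = -1 := by
  cases x <;> simp [sgnb]

private lemma sum_sgn_orth {m : ℕ} (y y' : Fin m) (h : y ≠ y') :
    ∑ b : Fin m → Bool, sgnb (b y) * sgnb (b y') = 0 := by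
  have hinv : Function.Involutive (fun b : Fin m → Bool => Function.update b y (!(b y))) := by
    intro b
    funext z
    by_cases hz : z = y
    · subst hz; simp [Function.update_self]
    · simp [Function.update_of_ne hz]
  let e : (Fin m → Bool) ≃ (Fin m → Bool) := Function.Involutive.toPerm _ hinv
  have key : ∀ b : Fin m → Bool,
      sgnb ((e b) y) * sgnb ((e b) y') = -(sgnb (b y) * sgnb (b y')) := by
    intro b
    have h1 : (e b) y = !(b y) := by simp [e, Function.Involutive.toPerm]
    have h2 : (e b) y' = b y' := by
      simp [e, Function.Involutive.toPerm, Function.update_of_ne (Ne.symm h)]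
    rw [h1, h2]
    cases b y <;> cases b y' <;> norm_num [sgnb]
  have := Equiv.sum_comp e (fun b => sgnb (b y) * sgnb (b y'))
  have h2 : ∑ b : Fin m → Bool, sgnb (b y) * sgnb (b y')
      = -∑ b : Fin m → Bool, sgnb (b y) * sgnb (b y') := by
    conv_lhs => rw [← this]
    rw [← Finset.sum_neg_distrib]
    exact Finset.sum_congr rfl fun b _ => key b
  linarith

private lemma avg_identity {m : ℕ} (c : Fin m → Fin m → ℝ) :
    ∑ b : Fin m → Bool, ∑ x : Fin m, (∑ y : Fin m, c x y * sgnb (b y)) ^ 2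
      = 2 ^ m * ∑ x : Fin m, ∑ y : Fin m, (c x y) ^ 2 := by
  rw [Finset.sum_comm]
  have : ∀ x : Fin m,
      ∑ b : Fin m → Bool, (∑ y : Fin m, c x y * sgnb (b y)) ^ 2
        = 2 ^ m * ∑ y : Fin m, (c x y) ^ 2 := by
    intro x
    have expand : ∀ b : Fin m → Bool,
        (∑ y : Fin m, c x y * sgnb (b y)) ^ 2
          = ∑ y : Fin m, ∑ y' : Fin m,
              c x y * c x y' * (sgnb (b y) * sgnb (b y')) := by
      intro b
      rw [sq, Finset.sum_mul_sum]
      exact Finset.sum_congr rfl fun y _ => Finset.sum_congr rfl fun y' _ => by ring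
    calc ∑ b : Fin m → Bool, (∑ y : Fin m, c x y * sgnb (b y)) ^ 2
        = ∑ b : Fin m → Bool, ∑ y : Fin m, ∑ y' : Fin m,
            c x y * c x y' * (sgnb (b y) * sgnb (b y')) :=
          Finset.sum_congr rfl fun b _ => expand b
      _ = ∑ y : Fin m, ∑ y' : Fin m, ∑ b : Fin m → Bool,
            c x y * c x y' * (sgnb (b y) * sgnb (b y')) := by
          rw [Finset.sum_comm]
          exact Finset.sum_congr rfl fun y _ => Finset.sum_comm
      _ = ∑ y : Fin m, ∑ y' : Fin m,
            c x y * c x y' * ∑ b : Fin m → Bool, (sgnb (b y) * sgnb (b y')) := by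
          exact Finset.sum_congr rfl fun y _ => Finset.sum_congr rfl fun y' _ =>
            (Finset.mul_sum _ _ _).symm
      _ = ∑ y : Fin m, c x y * c x y * (2 ^ m : ℝ) := by
          refine Finset.sum_congr rfl fun y _ => ?_
          rw [Finset.sum_eq_single y]
          · congr 1
            have : ∑ b : Fin m → Bool, sgnb (b y) * sgnb (b y)
                = ∑ _b : Fin m → Bool, (1:ℝ) :=
              Finset.sum_congr rfl fun b _ => sgnb_sq (b y)
            rw [this, Finset.sum_const, Finset.card_univ]
            simp [Fintype.card_fun]
          · intro y' _ hy'
            rw [sum_sgn_orth y y' (Ne.symm hy'), mul_zero]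
          · intro h; exact absurd (Finset.mem_univ y) h
      _ = 2 ^ m * ∑ y : Fin m, (c x y) ^ 2 := by
          rw [Finset.mul_sum]
          exact Finset.sum_congr rfl fun y _ => by ring
  rw [Finset.sum_congr rfl fun x _ => this x, ← Finset.mul_sum]

private lemma pi_repr {m : ℕ} (f : ((Fin m → Fin m → ℝ) →L[ℝ] ℝ))
    (v : Fin m → Fin m → ℝ) :
    f v = ∑ x : Fin m, ∑ y : Fin m,
      v x y * f (Pi.single x (Pi.single y (1:ℝ))) := by
  have hv : v = ∑ x : Fin m, ∑ y : Fin m, v x y • (Pi.single x (Pi.single y (1:ℝ)) : Fin m → Fin m → ℝ) := by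
    funext x' y'
    simp only [Finset.sum_apply, Pi.smul_apply, smul_eq_mul, Pi.single_apply, ite_apply,
      Pi.zero_apply, mul_ite, mul_one, mul_zero]
    simp
  conv_lhs => rw [hv]
  rw [map_sum]
  refine Finset.sum_congr rfl fun x _ => ?_
  rw [map_sum]
  refine Finset.sum_congr rfl fun y _ => ?_
  rw [map_smul]; rfl

private theorem aux (m : ℕ) (r : Fin m → Fin m → ℝ)
    (hr : Real.sqrt (∑ x : Fin m, ∑ y : Fin m, r x y ^ 2) ≤ 1) :
    r ∈ convexHull ℝ {d : Fin m → Fin m → ℝ |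
      ∃ a b : Fin m → ℝ, (∀ x, a x = 1 ∨ a x = -1) ∧ (∀ y, b y = 1 ∨ b y = -1) ∧
        d = fun x y => a x * b y} := by
  set S : Set (Fin m → Fin m → ℝ) := {d : Fin m → Fin m → ℝ |
      ∃ a b : Fin m → ℝ, (∀ x, a x = 1 ∨ a x = -1) ∧ (∀ y, b y = 1 ∨ b y = -1) ∧
        d = fun x y => a x * b y} with hS
  by_contra hcon
  have hfin : S.Finite := by
    have : S ⊆ Set.range (fun p : (Fin m → Bool) × (Fin m → Bool) =>
        (fun x y => sgnb (p.1 x) * sgnb (p.2 y) : Fin m → Fin m → ℝ)) := by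
      rintro d ⟨a, b, ha, hb, rfl⟩
      refine ⟨⟨fun x => a x = 1, fun y => b y = 1⟩, ?_⟩
      funext x y
      have hax : sgnb (decide (a x = 1)) = a x := by
        rcases ha x with h | h <;> rw [h] <;> norm_num [sgnb]
      have hby : sgnb (decide (b y = 1)) = b y := by
        rcases hb y with h | h <;> rw [h] <;> norm_num [sgnb]
      simp [hax, hby]
    exact Set.Finite.subset (Set.finite_range _) this
  obtain ⟨f, u, hlt, hgt⟩ := geometric_hahn_banach_closed_point
    (convex_convexHull ℝ S) (hfin.isClosed_convexHull (𝕜 := ℝ)) hcon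
  -- c : coefficients of f
  set c : Fin m → Fin m → ℝ := fun x y => f (Pi.single x (Pi.single y (1:ℝ))) with hc
  have hfr : f r ≤ Real.sqrt (∑ x : Fin m, ∑ y : Fin m, (c x y) ^ 2) := by
    have h1 : f r = ∑ x : Fin m, ∑ y : Fin m, r x y * c x y := pi_repr f r
    -- Cauchy-Schwarz over the product type
    have h2 : (∑ x : Fin m, ∑ y : Fin m, r x y * c x y) ^ 2
        ≤ (∑ x : Fin m, ∑ y : Fin m, r x y ^ 2) *
          (∑ x : Fin m, ∑ y : Fin m, c x y ^ 2) := by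
      have := Finset.sum_mul_sq_le_sq_mul_sq (Finset.univ : Finset (Fin m × Fin m))
        (fun p => r p.1 p.2) (fun p => c p.1 p.2)
      simpa [← Finset.sum_product', Finset.univ_product_univ] using this
    have hr2 : (∑ x : Fin m, ∑ y : Fin m, r x y ^ 2) ≤ 1 := by
      have hnn : (0:ℝ) ≤ ∑ x : Fin m, ∑ y : Fin m, r x y ^ 2 :=
        Finset.sum_nonneg fun x _ => Finset.sum_nonneg fun y _ => sq_nonneg _
      nlinarith [Real.sq_sqrt hnn, Real.sqrt_nonneg (∑ x : Fin m, ∑ y : Fin m, r x y ^ 2)]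
    have hcnn : (0:ℝ) ≤ ∑ x : Fin m, ∑ y : Fin m, c x y ^ 2 :=
      Finset.sum_nonneg fun x _ => Finset.sum_nonneg fun y _ => sq_nonneg _
    have h3 : (∑ x : Fin m, ∑ y : Fin m, r x y * c x y) ^ 2
        ≤ ∑ x : Fin m, ∑ y : Fin m, c x y ^ 2 := le_trans h2 (by nlinarith)
    rw [h1]
    rcases le_or_gt (∑ x : Fin m, ∑ y : Fin m, r x y * c x y) 0 with h | h
    · exact le_trans h (Real.sqrt_nonneg _)
    · have := Real.sqrt_le_sqrt h3
      rwa [Real.sqrt_sq h.le] at this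
  -- find good b
  have hbex : ∃ b : Fin m → Bool,
      (∑ x : Fin m, ∑ y : Fin m, (c x y) ^ 2)
        ≤ ∑ x : Fin m, (∑ y : Fin m, c x y * sgnb (b y)) ^ 2 := by
    have hne : (Finset.univ : Finset (Fin m → Bool)).Nonempty := Finset.univ_nonempty
    have hsum : ∑ _b : Fin m → Bool, (∑ x : Fin m, ∑ y : Fin m, (c x y) ^ 2)
        ≤ ∑ b : Fin m → Bool, ∑ x : Fin m, (∑ y : Fin m, c x y * sgnb (b y)) ^ 2 := by
      rw [avg_identity, Finset.sum_const, Finset.card_univ, nsmul_eq_mul]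
      simp [Fintype.card_fun]
    obtain ⟨b, _, hb⟩ := Finset.exists_le_of_sum_le hne hsum
    exact ⟨b, hb⟩
  obtain ⟨b, hb⟩ := hbex
  set w : Fin m → ℝ := fun x => ∑ y : Fin m, c x y * sgnb (b y) with hw
  set A : Fin m → ℝ := fun x => if 0 ≤ w x then 1 else -1 with hA
  set d : Fin m → Fin m → ℝ := fun x y => A x * sgnb (b y) with hd
  have hdS : d ∈ S := by
    refine ⟨A, fun y => sgnb (b y), fun x => ?_, fun y => sgnb_pm (b y), rfl⟩
    by_cases h : 0 ≤ w x <;> simp [hA, h]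
  have hdmem : d ∈ convexHull ℝ S := subset_convexHull ℝ S hdS
  have hfd : f d = ∑ x : Fin m, A x * w x := by
    rw [pi_repr f d]
    refine Finset.sum_congr rfl fun x _ => ?_
    rw [hw]
    simp only
    rw [Finset.mul_sum]
    refine Finset.sum_congr rfl fun y _ => ?_
    show A x * sgnb (b y) * c x y = A x * (c x y * sgnb (b y))
    ring
  have hAw : ∀ x, A x * w x = |w x| := by
    intro x
    by_cases h : 0 ≤ w x
    · rw [abs_of_nonneg h]; simp [hA, h]
    · rw [abs_of_neg (not_le.mp h)]; simp [hA, h]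
  have hl1l2 : Real.sqrt (∑ x : Fin m, (w x) ^ 2) ≤ ∑ x : Fin m, |w x| := by
    have h1 : ∑ x : Fin m, (w x) ^ 2 ≤ (∑ x : Fin m, |w x|) ^ 2 := by
      have := Finset.sum_sq_le_sq_sum_of_nonneg
        (f := fun x => |w x|) (s := (Finset.univ : Finset (Fin m)))
        (fun i _ => abs_nonneg _)
      simpa [sq_abs] using this
    have := Real.sqrt_le_sqrt h1
    rwa [Real.sqrt_sq (Finset.sum_nonneg fun x _ => abs_nonneg _)] at this
  have hfinal : f r ≤ f d := by
    calc f r ≤ Real.sqrt (∑ x : Fin m, ∑ y : Fin m, (c x y) ^ 2) := hfr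
      _ ≤ Real.sqrt (∑ x : Fin m, (w x) ^ 2) := Real.sqrt_le_sqrt hb
      _ ≤ ∑ x : Fin m, |w x| := hl1l2
      _ = f d := by rw [hfd]; exact (Finset.sum_congr rfl fun x _ => (hAw x).symm)
  exact absurd hfinal (not_le.mpr (lt_trans (hlt d hdmem) hgt))

theorem unit_ball_subset_local_polytope (m : ℕ) (r : Matrix (Fin m) (Fin m) ℝ)
    (hr : Real.sqrt (∑ x : Fin m, ∑ y : Fin m, r x y ^ 2) ≤ 1) :
    r ∈ convexHull ℝ {d : Matrix (Fin m) (Fin m) ℝ |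
      ∃ a b : Fin m → ℝ, (∀ x, a x = 1 ∨ a x = -1) ∧ (∀ y, b y = 1 ∨ b y = -1) ∧
        d = fun x y => a x * b y} := aux m r hr
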